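/- Suppose ω_i ≥ 0 for all i. For every ζ, ν ∈ ℝ^d, the second derivative at t = 0 of the map t ↦ Q_θ(ζ + tν) is bounded below by −Σ_{i=1}^n (2/θ) ω_i exp(−(y_i − ⟨u_i, ζ⟩)²/θ) ⟨u_i, ν⟩²; that is, the Hessian of Q_θ at ζ satisfies Hess Q_θ(ζ)(ν, ν) ≥ −ν^⊤ U^⊤ W(ζ) U ν, where W(ζ) is the diagonal matrix with entries W_{ii} = (2/θ) ω_i exp(−(y_i − ⟨u_i, ζ⟩)²/θ) and U has rows u_i^⊤. -/

import Mathlib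

open Real Finset

/-- The exponential squared loss objective
`Q_θ(ζ) = ∑ i, ω_i exp(-(y_i - ⟨u_i, ζ⟩)² / θ)`. -/
noncomputable def expSqLoss (n d : ℕ) (ω y : Fin n → ℝ) (u : Fin n → Fin d → ℝ)
    (θ : ℝ) (ζ : Fin d → ℝ) : ℝ :=
  ∑ i, ω i * Real.exp (-(y i - ∑ j, u i j * ζ j) ^ 2 / θ)

lemma expSq_hasDerivAt (θ a b t : ℝ) :
    HasDerivAt (fun s : ℝ => Real.exp (-(a - s * b) ^ 2 / θ))
      (Real.exp (-(a - t * b) ^ 2 / θ) * (2 * b * (a - t * b) / θ)) t := by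
  have h1 : HasDerivAt (fun s : ℝ => a - s * b) (-b) t := by
    simpa using ((hasDerivAt_id t).mul_const b).const_sub a
  have h2 : HasDerivAt (fun s : ℝ => -(a - s * b) ^ 2 / θ) (2 * b * (a - t * b) / θ) t := by
    have := ((h1.fun_pow 2).fun_neg).div_const θ
    refine this.congr_deriv ?_
    ring
  simpa using h2.exp

/-- the second derivative at `t = 0` of `t ↦ Q_θ(ζ + tν)` is bounded
below by `-∑ i (2/θ) ω_i exp(-(y_i - ⟨u_i,ζ⟩)²/θ) ⟨u_i, ν⟩²`, i.e.
`Hess Q_θ(ζ)(ν, ν) ≥ -νᵀ Uᵀ W(ζ) U ν`, provided all `ω_i ≥ 0`. -/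
theorem expSqLoss_hessian_lower_bound (n d : ℕ) (ω y : Fin n → ℝ)
    (u : Fin n → Fin d → ℝ) (θ : ℝ) (hθ : 0 < θ) (hω : ∀ i, 0 ≤ ω i)
    (ζ ν : Fin d → ℝ) :
    iteratedDeriv 2 (fun t : ℝ => expSqLoss n d ω y u θ (fun j => ζ j + t * ν j)) 0 ≥
      -∑ i, (2 / θ) * ω i * Real.exp (-(y i - ∑ j, u i j * ζ j) ^ 2 / θ) *
        (∑ j, u i j * ν j) ^ 2 := by
  set A : Fin n → ℝ := fun i => ∑ j, u i j * ζ j with hA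
  set B : Fin n → ℝ := fun i => ∑ j, u i j * ν j with hB
  have hF : (fun t : ℝ => expSqLoss n d ω y u θ (fun j => ζ j + t * ν j))
      = fun t : ℝ => ∑ i, ω i * Real.exp (-((y i - A i) - t * B i) ^ 2 / θ) := by
    funext t
    unfold expSqLoss
    refine Finset.sum_congr rfl fun i _ => ?_
    have : ∑ j, u i j * (ζ j + t * ν j) = A i + t * B i := by
      calc ∑ j, u i j * (ζ j + t * ν j)
          = ∑ j, (u i j * ζ j + t * (u i j * ν j)) :=
            Finset.sum_congr rfl fun j _ => by ring
        _ = A i + t * B i := by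
            rw [Finset.sum_add_distrib, ← Finset.mul_sum]
    rw [this]
    ring_nf
  rw [hF]
  set c : Fin n → ℝ := fun i => y i - A i with hc
  set D1 : ℝ → ℝ := fun t => ∑ i, ω i *
    (Real.exp (-(c i - t * B i) ^ 2 / θ) * (2 * B i * (c i - t * B i) / θ)) with hD1def
  have hD1 : ∀ t, HasDerivAt (fun t : ℝ => ∑ i, ω i * Real.exp (-(c i - t * B i) ^ 2 / θ))
      (D1 t) t := by
    intro t
    exact HasDerivAt.fun_sum fun i _ => (expSq_hasDerivAt θ (c i) (B i) t).const_mul (ω i)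
  have hderivG : deriv (fun t : ℝ => ∑ i, ω i * Real.exp (-(c i - t * B i) ^ 2 / θ)) = D1 :=
    funext fun t => (hD1 t).deriv
  have hD2 : HasDerivAt D1
      (∑ i, ω i * ((Real.exp (-(c i - 0 * B i) ^ 2 / θ) * (2 * B i * (c i - 0 * B i) / θ)) *
          (2 * B i * (c i - 0 * B i) / θ) +
        Real.exp (-(c i - 0 * B i) ^ 2 / θ) * (2 * B i * (-B i) / θ))) 0 := by
    refine HasDerivAt.fun_sum fun i _ => ?_
    have h1 : HasDerivAt (fun s : ℝ => c i - s * B i) (-(B i)) 0 := by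
      simpa using ((hasDerivAt_id (0:ℝ)).mul_const (B i)).const_sub (c i)
    have h3 : HasDerivAt (fun s : ℝ => 2 * B i * (c i - s * B i) / θ)
        (2 * B i * (-B i) / θ) 0 := by
      simpa using (h1.const_mul (2 * B i)).div_const θ
    exact ((expSq_hasDerivAt θ (c i) (B i) 0).mul h3).const_mul (ω i)
  have h2 : iteratedDeriv 2 (fun t : ℝ => ∑ i, ω i * Real.exp (-(c i - t * B i) ^ 2 / θ)) 0
      = deriv D1 0 := by
    rw [iteratedDeriv_succ, iteratedDeriv_one, hderivG]
  rw [h2, hD2.deriv]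
  simp only [zero_mul, sub_zero]
  rw [ge_iff_le, ← Finset.sum_neg_distrib]
  refine Finset.sum_le_sum fun i _ => ?_
  have hE : (0:ℝ) < Real.exp (-(c i) ^ 2 / θ) := Real.exp_pos _
  have h0 : 0 ≤ ω i * Real.exp (-(c i) ^ 2 / θ) * (2 * B i * c i / θ) ^ 2 :=
    mul_nonneg (mul_nonneg (hω i) hE.le) (sq_nonneg _)
  rw [show (∑ j, u i j * ν j) = B i from rfl, show y i - A i = c i from rfl]
  have key : ω i * (Real.exp (-(c i) ^ 2 / θ) * (2 * B i * c i / θ) * (2 * B i * c i / θ) +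
        Real.exp (-(c i) ^ 2 / θ) * (2 * B i * -B i / θ))
      = ω i * Real.exp (-(c i) ^ 2 / θ) * (2 * B i * c i / θ) ^ 2
        - 2 / θ * ω i * Real.exp (-(c i) ^ 2 / θ) * B i ^ 2 := by ring
  linarith [h0, key.ge]
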